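/- Let n ≥ k ≥ 2 and let A ∈ ℂ^{2^n×2^n} be an arbitrary matrix. For i, j ∈ {1, …, k} with i ≠ j, let Z̃_i, Z̃_j ∈ ℂ^{2^k×2^k} denote the matrices acting as the Pauli Z = diag(1, −1) on the i-th (respectively j-th) of k qubits and as identity on the other k − 1 qubits. Then ∫_{U(2^k)} tr((I_{2^{n−k}} ⊗ Z̃_i) · (I_{2^{n−k}} ⊗ U) A (I_{2^{n−k}} ⊗ U)†) · tr((I_{2^{n−k}} ⊗ Z̃_j) · (I_{2^{n−k}} ⊗ U) A (I_{2^{n−k}} ⊗ U)†) dU = 0, where dU is the Haar probability measure on the unitary group U(2^k). -/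

import Mathlib

/-!
Common definitions: Haar measure on the unitary group, the MPS ansatz circuit,
tensor-product embeddings of local operators, and the quantities `h₁`, `h₂`.
-/

noncomputable section

namespace MPS

open MeasureTheory Matrix
open scoped ComplexOrder

/-- The unitary group `U(d)` as matrices over `ℂ`. -/
abbrev UG (d : ℕ) : Submonoid (Matrix (Fin d) (Fin d) ℂ) := Matrix.unitaryGroup (Fin d) ℂ

instance matrixMeasurableSpace (m n : ℕ) : MeasurableSpace (Matrix (Fin m) (Fin n) ℂ) :=
  borel _

instance matrixBorelSpace (m n : ℕ) : BorelSpace (Matrix (Fin m) (Fin n) ℂ) := ⟨rfl⟩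

instance UGCompact (d : ℕ) : CompactSpace (UG d) := by
  have h1 : IsClosed {A : Matrix (Fin d) (Fin d) ℂ | star A * A = 1} :=
    isClosed_eq (continuous_star.matrix_mul continuous_id) continuous_const
  have h2 : IsClosed {A : Matrix (Fin d) (Fin d) ℂ | A * star A = 1} :=
    isClosed_eq (continuous_id.matrix_mul continuous_star) continuous_const
  have heq : (UG d : Set (Matrix (Fin d) (Fin d) ℂ)) =
      {A | star A * A = 1} ∩ {A | A * star A = 1} := by
    ext A
    simpa using Unitary.mem_iff
  have hclosed : IsClosed ((UG d : Set (Matrix (Fin d) (Fin d) ℂ))) := by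
    rw [heq]; exact h1.inter h2
  have hsub : (UG d : Set (Matrix (Fin d) (Fin d) ℂ)) ⊆
      (Set.univ.pi fun _ : Fin d => Set.univ.pi fun _ : Fin d => Metric.closedBall (0 : ℂ) 1) := by
    intro A hA i _ j _
    simpa using entry_norm_bound_of_unitary hA i j
  have hcpt : IsCompact ((UG d : Set (Matrix (Fin d) (Fin d) ℂ))) :=
    IsCompact.of_isClosed_subset
      (isCompact_univ_pi fun _ => isCompact_univ_pi fun _ => isCompact_closedBall 0 1)
      hclosed hsub
  exact isCompact_iff_compactSpace.mp hcpt

instance UGBorel (d : ℕ) : BorelSpace (UG d) :=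
  Subtype.borelSpace _

instance UGTopGroup (d : ℕ) : IsTopologicalGroup (UG d) where
  continuous_mul := continuous_mul
  continuous_inv := by
    exact Continuous.subtype_mk (continuous_star.comp continuous_subtype_val) _

/-- The Haar probability measure on the unitary group `U(d)`. -/
def haarUG (d : ℕ) : Measure (UG d) := Measure.haarMeasure ⊤

instance haarUGProb (d : ℕ) : IsProbabilityMeasure (haarUG d) := by
  constructor
  have := Measure.haarMeasure_self (G := UG d) (K₀ := ⊤)
  rw [TopologicalSpace.PositiveCompacts.coe_top] at this
  exact this

/-- The distribution of `T` independent Haar-random elements of `U(d)`. -/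
def haarTuple (T d : ℕ) : Measure (Fin T → UG d) := Measure.pi fun _ => haarUG d

instance haarTupleProb (T d : ℕ) : IsProbabilityMeasure (haarTuple T d) :=
  Measure.pi.instIsProbabilityMeasure (fun _ : Fin T => haarUG d)

/-- The `t`-th binary digit of `x` (from the least significant). -/
def bitAt (t x : ℕ) : ℕ := x / 2 ^ t % 2

/-- `bitAt` as an element of `Fin 2`. -/
def bitFin (t : ℕ) (x : ℕ) : Fin 2 := ⟨bitAt t x, Nat.mod_lt _ (by norm_num)⟩

/-- `I_{2^(n-k-b)} ⊗ U ⊗ I_{2^b}` for a `2^k × 2^k` matrix `U`, as a `2^n × 2^n` matrix,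
with big-endian ordering of the qubits (qubit 1 = most significant bit). -/
def embed (n k b : ℕ) (U : Matrix (Fin (2 ^ k)) (Fin (2 ^ k)) ℂ) :
    Matrix (Fin (2 ^ n)) (Fin (2 ^ n)) ℂ :=
  Matrix.of fun x y =>
    if (x : ℕ) / 2 ^ (k + b) = (y : ℕ) / 2 ^ (k + b) ∧ (x : ℕ) % 2 ^ b = (y : ℕ) % 2 ^ b then
      U ⟨(x : ℕ) / 2 ^ b % 2 ^ k, Nat.mod_lt _ (Nat.two_pow_pos k)⟩
        ⟨(y : ℕ) / 2 ^ b % 2 ^ k, Nat.mod_lt _ (Nat.two_pow_pos k)⟩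
    else 0

/-- The MPS ansatz circuit `C = ∏_{p=1}^{T} (I_{2^{n-k-p+1}} ⊗ U_p ⊗ I_{2^{p-1}})`, the
product taken with the `p = 1` factor leftmost. -/
def mpsCircuit (n k : ℕ) {T : ℕ} (U : Fin T → Matrix (Fin (2 ^ k)) (Fin (2 ^ k)) ℂ) :
    Matrix (Fin (2 ^ n)) (Fin (2 ^ n)) ℂ :=
  ((List.finRange T).map fun p => embed n k p.1 (U p)).prod

/-- The MPS circuit built from unitaries. -/
def circuitOf (n k : ℕ) {T : ℕ} (U : Fin T → UG (2 ^ k)) :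
    Matrix (Fin (2 ^ n)) (Fin (2 ^ n)) ℂ :=
  mpsCircuit n k fun p => (U p : Matrix (Fin (2 ^ k)) (Fin (2 ^ k)) ℂ)

/-- The global observable `(|0⟩⟨0|)^{⊗ n} = |0…0⟩⟨0…0|`. -/
def proj00 (n : ℕ) : Matrix (Fin (2 ^ n)) (Fin (2 ^ n)) ℂ :=
  Matrix.single 0 0 1

/-- The Pauli `Z` on qubit `i` (1-indexed, qubit 1 = most significant bit) of `n` qubits,
tensored with the identity elsewhere. -/
def pauliZ (n i : ℕ) : Matrix (Fin (2 ^ n)) (Fin (2 ^ n)) ℂ :=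
  Matrix.diagonal fun x => if bitAt (n - i) (x : ℕ) = 0 then 1 else -1

/-- The projector `|0⟩⟨0|_i` on qubit `i` (1-indexed) of `n` qubits, tensored with the
identity elsewhere. -/
def proj0At (n i : ℕ) : Matrix (Fin (2 ^ n)) (Fin (2 ^ n)) ℂ :=
  Matrix.diagonal fun x => if bitAt (n - i) (x : ℕ) = 0 then 1 else 0

/-- `M 1 ⊗ M 2 ⊗ ⋯ ⊗ M n` of single-qubit matrices, as a `2^n × 2^n` matrix. -/
def tensorProd (n : ℕ) (M : Fin n → Matrix (Fin 2) (Fin 2) ℂ) :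
    Matrix (Fin (2 ^ n)) (Fin (2 ^ n)) ℂ :=
  Matrix.of fun x y =>
    ∏ i : Fin n, M i (bitFin (n - 1 - (i : ℕ)) (x : ℕ)) (bitFin (n - 1 - (i : ℕ)) (y : ℕ))

/-- The entrywise 1-norm `‖A‖₁ = Σ_{ij} |A_{ij}|`. -/
def entryOneNorm {d : ℕ} (A : Matrix (Fin d) (Fin d) ℂ) : ℝ :=
  ∑ i, ∑ j, ‖A i j‖

/-- `h₁(σ) = min over single-qubit unitaries V₁, …, V_n of ‖(V₁⊗⋯⊗V_n) σ (V₁⊗⋯⊗V_n)†‖₁²`. -/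
def h1 (n : ℕ) (σ : Matrix (Fin (2 ^ n)) (Fin (2 ^ n)) ℂ) : ℝ :=
  ⨅ V : Fin n → UG 2,
    entryOneNorm (tensorProd n (fun i => (V i : Matrix (Fin 2) (Fin 2) ℂ)) * σ *
      (tensorProd n fun i => (V i : Matrix (Fin 2) (Fin 2) ℂ))ᴴ) ^ 2

/-- The trace norm `‖A‖_tr = tr √(A† A)`. -/
def traceNorm {d : ℕ} (A : Matrix (Fin d) (Fin d) ℂ) : ℝ :=
  ((Matrix.posSemidef_conjTranspose_mul_self A).1.eigenvectorUnitary.1 *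
    diagonal (((↑) : ℝ → ℂ) ∘ (√·) ∘ (Matrix.posSemidef_conjTranspose_mul_self A).1.eigenvalues) *
    (star (Matrix.posSemidef_conjTranspose_mul_self A).1.eigenvectorUnitary :
      Matrix (Fin d) (Fin d) ℂ)).trace.re

/-- `h₂(σ) = min over single-qubit states ρ₁, …, ρ_n of ‖ρ₁⊗⋯⊗ρ_n − σ‖_tr`. -/
def h2 (n : ℕ) (σ : Matrix (Fin (2 ^ n)) (Fin (2 ^ n)) ℂ) : ℝ :=
  ⨅ ρ : Fin n → {ρ : Matrix (Fin 2) (Fin 2) ℂ // ρ.PosSemidef ∧ ρ.trace = 1},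
    traceNorm (tensorProd n (fun i => (ρ i : Matrix (Fin 2) (Fin 2) ℂ)) - σ)

end MPS



noncomputable section

namespace HaarProof

open Matrix MeasureTheory
open scoped Kronecker

/-- The reindexing equivalence. -/
def eEquiv {n k : ℕ} (h : 2 ^ (n - k) * 2 ^ k = 2 ^ n) :
    Fin (2 ^ (n - k)) × Fin (2 ^ k) ≃ Fin (2 ^ n) :=
  finProdFinEquiv.trans (finCongr h)

lemma eEquiv_symm {n k : ℕ} (h : 2 ^ (n - k) * 2 ^ k = 2 ^ n) (x : Fin (2 ^ n)) :
    (eEquiv h).symm x =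
      (⟨(x : ℕ) / 2 ^ k,
          Nat.div_lt_of_lt_mul (by rw [mul_comm] at h; exact lt_of_lt_of_eq x.2 h.symm)⟩,
       ⟨(x : ℕ) % 2 ^ k, Nat.mod_lt _ (Nat.two_pow_pos k)⟩) := by
  rw [Equiv.symm_apply_eq]
  apply Fin.ext
  simp [eEquiv, Fin.ext_iff, Nat.mod_add_div]

lemma embed_eq {n k : ℕ} (h : 2 ^ (n - k) * 2 ^ k = 2 ^ n)
    (U : Matrix (Fin (2 ^ k)) (Fin (2 ^ k)) ℂ) :
    MPS.embed n k 0 U = Matrix.reindex (eEquiv h) (eEquiv h) ((1 : Matrix (Fin (2 ^ (n - k))) (Fin (2 ^ (n - k))) ℂ) ⊗ₖ U) := by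
  ext x y
  rw [reindex_apply, submatrix_apply, eEquiv_symm, eEquiv_symm]
  simp only [MPS.embed, kroneckerMap_apply, Matrix.of_apply, pow_zero, Nat.div_one, Nat.mod_one,
    and_true, add_zero]
  by_cases hxy : (x : ℕ) / 2 ^ k = (y : ℕ) / 2 ^ k
  · simp [hxy, Matrix.one_apply, Fin.ext_iff]
  · simp [hxy, Matrix.one_apply, Fin.ext_iff]

lemma embed_mul {n k : ℕ} (hkn : k ≤ n)
    (U V : Matrix (Fin (2 ^ k)) (Fin (2 ^ k)) ℂ) :
    MPS.embed n k 0 (U * V) = MPS.embed n k 0 U * MPS.embed n k 0 V := by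
  have h : 2 ^ (n - k) * 2 ^ k = 2 ^ n := by rw [← pow_add]; congr 1; omega
  rw [embed_eq h, embed_eq h, embed_eq h]
  rw [reindex_apply, reindex_apply, reindex_apply, submatrix_mul_equiv,
    ← Matrix.mul_kronecker_mul, one_mul]

lemma embed_conjTranspose {n k : ℕ} (hkn : k ≤ n)
    (U : Matrix (Fin (2 ^ k)) (Fin (2 ^ k)) ℂ) :
    MPS.embed n k 0 Uᴴ = (MPS.embed n k 0 U)ᴴ := by
  have h : 2 ^ (n - k) * 2 ^ k = 2 ^ n := by rw [← pow_add]; congr 1; omega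
  rw [embed_eq h, embed_eq h, reindex_apply, reindex_apply, conjTranspose_submatrix]
  ext ⟨a, b⟩ ⟨c, d⟩
  simp [conjTranspose_apply, Matrix.one_apply, apply_ite (star : ℂ → ℂ), eq_comm]

lemma embed_neg {n k : ℕ}
    (U : Matrix (Fin (2 ^ k)) (Fin (2 ^ k)) ℂ) :
    MPS.embed n k 0 (-U) = -(MPS.embed n k 0 U) := by
  ext x y
  simp only [MPS.embed, Matrix.of_apply, Matrix.neg_apply]
  split <;> simp


/-- `bitAt` as a test bit. -/
lemma bitAt_eq_testBit (t x : ℕ) : MPS.bitAt t x = if x.testBit t then 1 else 0 := by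
  rcases Nat.mod_two_eq_zero_or_one (x / 2 ^ t) with h | h <;>
    simp [MPS.bitAt, h, Nat.testBit_eq_decide_div_mod_eq]

/-- The bit-flip (Pauli X) matrix on bit `t` of `k` bits. -/
def flipMat (k t : ℕ) : Matrix (Fin (2 ^ k)) (Fin (2 ^ k)) ℂ :=
  Matrix.of fun x y => if (y : ℕ) = (x : ℕ) ^^^ 2 ^ t then 1 else 0

lemma flipMat_conjTranspose (k t : ℕ) : (flipMat k t)ᴴ = flipMat k t := by
  ext x y
  simp only [conjTranspose_apply, flipMat, Matrix.of_apply]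
  by_cases h : (x : ℕ) = (y : ℕ) ^^^ 2 ^ t
  · have h2 : (y : ℕ) = (x : ℕ) ^^^ 2 ^ t := by rw [h, xor_cancel_right]
    rw [if_pos h, if_pos h2]; exact star_one ℂ
  · have h2 : ¬((y : ℕ) = (x : ℕ) ^^^ 2 ^ t) := fun hc => h (by rw [hc, xor_cancel_right])
    rw [if_neg h, if_neg h2]; exact star_zero ℂ

lemma flipMat_mul_self (k t : ℕ) (ht : t < k) : flipMat k t * flipMat k t = 1 := by
  ext x y
  rw [Matrix.mul_apply]
  have hlt : (x : ℕ) ^^^ 2 ^ t < 2 ^ k :=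
    Nat.xor_lt_two_pow x.2 (Nat.pow_lt_pow_right one_lt_two ht)
  rw [Finset.sum_eq_single (⟨(x : ℕ) ^^^ 2 ^ t, hlt⟩ : Fin (2 ^ k))]
  · simp only [flipMat, Matrix.of_apply, if_pos rfl, one_mul, xor_cancel_right,
      Matrix.one_apply, Fin.ext_iff]
    split <;> simp_all [eq_comm]
  · intro b _ hb
    simp only [flipMat, Matrix.of_apply]
    rw [if_neg, zero_mul]
    exact fun hc => hb (Fin.ext hc)
  · simp

lemma pauliZ_flipMat_anticomm (k i t : ℕ) (ht : k - i = t) :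
    MPS.pauliZ k i * flipMat k t = -(flipMat k t * MPS.pauliZ k i) := by
  subst ht
  ext x y
  simp only [MPS.pauliZ, Matrix.diagonal_mul, Matrix.mul_diagonal, Matrix.neg_apply, flipMat,
    Matrix.of_apply]
  by_cases hc : (y : ℕ) = (x : ℕ) ^^^ 2 ^ (k - i)
  · rw [if_pos hc]
    have hflip : MPS.bitAt (k - i) (y : ℕ) = if (x : ℕ).testBit (k - i) then 0 else 1 := by
      rw [hc, bitAt_eq_testBit]
      cases hb : (x : ℕ).testBit (k - i) <;>
        simp [Nat.testBit_xor, Nat.testBit_two_pow_self, hb]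
    rw [bitAt_eq_testBit, hflip]
    cases hb : (x : ℕ).testBit (k - i) <;> simp
  · rw [if_neg hc]
    simp

lemma pauliZ_flipMat_comm (k i t : ℕ) (hit : k - i ≠ t) :
    MPS.pauliZ k i * flipMat k t = flipMat k t * MPS.pauliZ k i := by
  ext x y
  simp only [MPS.pauliZ, Matrix.diagonal_mul, Matrix.mul_diagonal, flipMat, Matrix.of_apply]
  by_cases hc : (y : ℕ) = (x : ℕ) ^^^ 2 ^ t
  · rw [if_pos hc]
    have hsame : MPS.bitAt (k - i) (y : ℕ) = MPS.bitAt (k - i) (x : ℕ) := by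
      rw [hc, bitAt_eq_testBit, bitAt_eq_testBit]
      simp [Nat.testBit_xor, Nat.testBit_two_pow, Ne.symm hit]
    rw [hsame]
    ring
  · rw [if_neg hc]
    simp

end HaarProof

open MeasureTheory Matrix
open scoped ComplexOrder

/-- Second-moment Haar integral: for any `A ∈ ℂ^{2^n × 2^n}` and distinct
`i, j ∈ {1, …, k}`, the Haar average of
`tr((I ⊗ Z̃_i) (I ⊗ U) A (I ⊗ U)†) · tr((I ⊗ Z̃_j) (I ⊗ U) A (I ⊗ U)†)` vanishes. -/
theorem haar_second_moment_local_Z (n k : ℕ) (hk : 2 ≤ k) (hkn : k ≤ n)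
    (A : Matrix (Fin (2 ^ n)) (Fin (2 ^ n)) ℂ) (i j : ℕ)
    (hi1 : 1 ≤ i) (hik : i ≤ k) (hj1 : 1 ≤ j) (hjk : j ≤ k) (hij : i ≠ j) :
    ∫ U : MPS.UG (2 ^ k),
        Matrix.trace (MPS.embed n k 0 (MPS.pauliZ k i) *
          (MPS.embed n k 0 (U : Matrix (Fin (2 ^ k)) (Fin (2 ^ k)) ℂ) * A *
            (MPS.embed n k 0 (U : Matrix (Fin (2 ^ k)) (Fin (2 ^ k)) ℂ))ᴴ)) *
        Matrix.trace (MPS.embed n k 0 (MPS.pauliZ k j) *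
          (MPS.embed n k 0 (U : Matrix (Fin (2 ^ k)) (Fin (2 ^ k)) ℂ) * A *
            (MPS.embed n k 0 (U : Matrix (Fin (2 ^ k)) (Fin (2 ^ k)) ℂ))ᴴ))
      ∂ MPS.haarUG (2 ^ k) = 0 := by
  have hti : k - i < k := by omega
  set E := MPS.embed n k 0 with hE
  set W := HaarProof.flipMat k (k - i) with hW
  have hWH : Wᴴ = W := HaarProof.flipMat_conjTranspose k (k - i)
  have hWW : W * W = 1 := HaarProof.flipMat_mul_self k (k - i) hti
  have hWmem : W ∈ MPS.UG (2 ^ k) := by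
    rw [Matrix.mem_unitaryGroup_iff, Matrix.star_eq_conjTranspose, hWH]
    exact hWW
  set w : MPS.UG (2 ^ k) := ⟨W, hWmem⟩ with hw
  have hEW : (E W)ᴴ = E W := by
    rw [hE, ← HaarProof.embed_conjTranspose hkn, hWH]
  have hWZiW : W * (MPS.pauliZ k i * W) = -MPS.pauliZ k i := by
    rw [HaarProof.pauliZ_flipMat_anticomm k i (k - i) rfl, mul_neg, ← Matrix.mul_assoc, hWW,
      one_mul]
  have hWZjW : W * (MPS.pauliZ k j * W) = MPS.pauliZ k j := by
    rw [HaarProof.pauliZ_flipMat_comm k j (k - i) (by omega), ← Matrix.mul_assoc, hWW, one_mul]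
  have key : ∀ (Z M : Matrix (Fin (2 ^ k)) (Fin (2 ^ k)) ℂ), W * (Z * W) = M →
      ∀ U : MPS.UG (2 ^ k),
      Matrix.trace (E Z * (E ((w * U : MPS.UG (2 ^ k)) : Matrix (Fin (2 ^ k)) (Fin (2 ^ k)) ℂ) *
          A * (E ((w * U : MPS.UG (2 ^ k)) : Matrix (Fin (2 ^ k)) (Fin (2 ^ k)) ℂ))ᴴ)) =
      Matrix.trace (E M * (E (U : Matrix (Fin (2 ^ k)) (Fin (2 ^ k)) ℂ) * A *
          (E (U : Matrix (Fin (2 ^ k)) (Fin (2 ^ k)) ℂ))ᴴ)) := by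
    intro Z M hM U
    have hcoe : ((w * U : MPS.UG (2 ^ k)) : Matrix (Fin (2 ^ k)) (Fin (2 ^ k)) ℂ) =
        W * (U : Matrix (Fin (2 ^ k)) (Fin (2 ^ k)) ℂ) := rfl
    rw [hcoe, hE, HaarProof.embed_mul hkn, ← hE, Matrix.conjTranspose_mul, hEW]
    have h1 : E Z * (E W * E (U : Matrix (Fin (2 ^ k)) (Fin (2 ^ k)) ℂ) * A *
          ((E (U : Matrix (Fin (2 ^ k)) (Fin (2 ^ k)) ℂ))ᴴ * E W)) =
        (E Z * E W * E (U : Matrix (Fin (2 ^ k)) (Fin (2 ^ k)) ℂ) * A *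
          (E (U : Matrix (Fin (2 ^ k)) (Fin (2 ^ k)) ℂ))ᴴ) * E W := by
      simp only [Matrix.mul_assoc]
    rw [h1, Matrix.trace_mul_comm]
    have h2 : E W * (E Z * E W * E (U : Matrix (Fin (2 ^ k)) (Fin (2 ^ k)) ℂ) * A *
          (E (U : Matrix (Fin (2 ^ k)) (Fin (2 ^ k)) ℂ))ᴴ) =
        (E W * (E Z * E W)) * (E (U : Matrix (Fin (2 ^ k)) (Fin (2 ^ k)) ℂ) * A *
          (E (U : Matrix (Fin (2 ^ k)) (Fin (2 ^ k)) ℂ))ᴴ) := by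
      simp only [Matrix.mul_assoc]
    rw [h2, hE, ← HaarProof.embed_mul hkn Z W, ← HaarProof.embed_mul hkn W (Z * W), hM]
  haveI : (MPS.haarUG (2 ^ k)).IsMulLeftInvariant := by
    unfold MPS.haarUG; infer_instance
  haveI : MeasurableMul (MPS.UG (2 ^ k)) :=
    { measurable_const_mul := fun c => (continuous_const.mul continuous_id).measurable
      measurable_mul_const := fun c => (continuous_id.mul continuous_const).measurable }
  set f := fun U : MPS.UG (2 ^ k) =>
    Matrix.trace (E (MPS.pauliZ k i) *
        (E (U : Matrix (Fin (2 ^ k)) (Fin (2 ^ k)) ℂ) * A *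
          (E (U : Matrix (Fin (2 ^ k)) (Fin (2 ^ k)) ℂ))ᴴ)) *
      Matrix.trace (E (MPS.pauliZ k j) *
        (E (U : Matrix (Fin (2 ^ k)) (Fin (2 ^ k)) ℂ) * A *
          (E (U : Matrix (Fin (2 ^ k)) (Fin (2 ^ k)) ℂ))ᴴ)) with hf
  show (∫ U : MPS.UG (2 ^ k), f U ∂ MPS.haarUG (2 ^ k)) = 0
  have hneg : ∀ U : MPS.UG (2 ^ k), f (w * U) = -f U := by
    intro U
    rw [hf]
    simp only
    rw [key (MPS.pauliZ k i) (-(MPS.pauliZ k i)) hWZiW U,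
      key (MPS.pauliZ k j) (MPS.pauliZ k j) hWZjW U, hE, HaarProof.embed_neg,
      Matrix.neg_mul, Matrix.trace_neg, neg_mul]
  have h0 : ∫ U, f (w * U) ∂ MPS.haarUG (2 ^ k) = ∫ U, f U ∂ MPS.haarUG (2 ^ k) :=
    MeasureTheory.integral_mul_left_eq_self f w
  have h3 : ∫ U, f U ∂ MPS.haarUG (2 ^ k) = -∫ U, f U ∂ MPS.haarUG (2 ^ k) := by
    conv_lhs => rw [← h0]
    simp_rw [hneg]
    exact MeasureTheory.integral_neg f
  linear_combination h3 / 2
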